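/- If X and Y are comonotonic random variables, then for every α ∈ (0,1) the lower quantile function is additive: F_{X+Y}^←(α) = F_X^←(α) + F_Y^←(α). -/

import Mathlib

open MeasureTheory

/-- The lower quantile function of a measure on `ℝ`. -/
noncomputable def lq (μ : Measure ℝ) (u : ℝ) : ℝ :=
  sInf {x : ℝ | u ≤ (μ (Set.Iic x)).toReal}

namespace LqAux

open Set Filter Topology

variable {μ : Measure ℝ} [IsProbabilityMeasure μ]

lemma F_mono {x y : ℝ} (h : x ≤ y) : (μ (Iic x)).toReal ≤ (μ (Iic y)).toReal :=
  ENNReal.toReal_mono (measure_ne_top μ _) (measure_mono (Iic_subset_Iic.2 h))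

lemma A_nonempty {β : ℝ} (hβ : β < 1) :
    {x : ℝ | β ≤ (μ (Iic x)).toReal}.Nonempty := by
  have h1 : Tendsto (fun x => (μ (Iic x)).toReal) atTop (𝓝 (1 : ℝ)) := by
    have := tendsto_measure_Iic_atTop (α := ℝ) μ
    rw [measure_univ] at this
    exact (ENNReal.tendsto_toReal (by norm_num)).comp this
  have : ∀ᶠ x in atTop, β < (μ (Iic x)).toReal :=
    h1.eventually (eventually_gt_nhds hβ)
  obtain ⟨x, hx⟩ := this.exists
  exact ⟨x, hx.le⟩

lemma exists_F_lt {β : ℝ} (hβ : 0 < β) : ∃ x : ℝ, (μ (Iic x)).toReal < β := by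
  have h0 : Tendsto (fun n : ℕ => μ (Iic (-(n : ℝ)))) atTop (𝓝 (0 : ENNReal)) := by
    have hanti : Antitone (fun n : ℕ => Iic (-(n : ℝ))) := by
      intro m n hmn
      exact Iic_subset_Iic.2 (by exact_mod_cast neg_le_neg (by exact_mod_cast hmn))
    have hempty : (⋂ n : ℕ, Iic (-(n : ℝ))) = (∅ : Set ℝ) := by
      ext y
      simp only [mem_iInter, mem_Iic, mem_empty_iff_false, iff_false, not_forall]
      obtain ⟨n, hn⟩ := exists_nat_gt (-y)
      exact ⟨n, by push_neg; linarith⟩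
    have := tendsto_measure_iInter_atTop (μ := μ)
      (fun n : ℕ => (measurableSet_Iic (a := -(n : ℝ))).nullMeasurableSet)
      hanti ⟨0, measure_ne_top μ _⟩
    rw [hempty, measure_empty] at this
    exact this
  have h0' : Tendsto (fun n : ℕ => (μ (Iic (-(n : ℝ)))).toReal) atTop (𝓝 (0 : ℝ)) :=
    (ENNReal.tendsto_toReal (by norm_num)).comp h0
  have : ∀ᶠ n : ℕ in atTop, (μ (Iic (-(n : ℝ)))).toReal < β :=
    h0'.eventually (eventually_lt_nhds hβ)
  obtain ⟨n, hn⟩ := this.exists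
  exact ⟨-(n : ℝ), hn⟩

lemma A_bddBelow {β : ℝ} (hβ : 0 < β) :
    BddBelow {x : ℝ | β ≤ (μ (Iic x)).toReal} := by
  obtain ⟨x₀, hx₀⟩ := exists_F_lt (μ := μ) hβ
  refine ⟨x₀, fun y hy => ?_⟩
  by_contra h
  push_neg at h
  exact absurd (hy.trans (F_mono h.le)) (not_le.2 hx₀)

lemma lq_mono {a b : ℝ} (ha : 0 < a) (hab : a ≤ b) (hb : b < 1) :
    lq μ a ≤ lq μ b := by
  refine csInf_le_csInf (A_bddBelow ha) (A_nonempty hb) ?_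
  intro x hx
  exact hab.trans hx

lemma monotoneOn_lq : MonotoneOn (lq μ) (Ioo (0:ℝ) 1) :=
  fun _ ha _ hb hab => lq_mono ha.1 hab hb.2

/-- Left-continuity style bound for `lq`. -/
lemma lq_le_of_forall {α x : ℝ} (hα : α ∈ Ioo (0:ℝ) 1)
    (h : ∀ β ∈ Ioo (0:ℝ) α, lq μ β ≤ x) : lq μ α ≤ x := by
  by_contra hc
  push_neg at hc
  set c' := (x + lq μ α) / 2 with hc'def
  have hxc' : x < c' := by simp [hc'def]; linarith
  have hc'lt : c' < lq μ α := by simp [hc'def]; linarith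
  have key : ∀ γ ∈ Ioo (0:ℝ) α, γ ≤ (μ (Iic c')).toReal := by
    intro γ hγ
    have hlq : lq μ γ < c' := lt_of_le_of_lt (h γ hγ) hxc'
    obtain ⟨y, hy, hyc'⟩ := exists_lt_of_csInf_lt (A_nonempty (hγ.2.trans hα.2)) hlq
    exact hy.trans (F_mono hyc'.le)
  have hFc' : α ≤ (μ (Iic c')).toReal := by
    refine le_of_forall_lt fun β hβα => ?_
    set γ := (max β 0 + α) / 2 with hγdef
    have hγ1 : 0 < γ := by
      have : (0:ℝ) ≤ max β 0 := le_max_right _ _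
      have := hα.1; positivity
    have hγ2 : γ < α := by
      have : max β 0 < α := max_lt hβα hα.1
      simp [hγdef]; linarith
    have hβγ : β < γ := by
      have : β ≤ max β 0 := le_max_left _ _
      have : max β 0 < α := max_lt hβα hα.1
      simp [hγdef]
      have hb := le_max_left β 0
      linarith
    exact lt_of_lt_of_le hβγ (key γ ⟨hγ1, hγ2⟩)
  have : lq μ α ≤ c' := csInf_le (A_bddBelow hα.1) hFc'
  linarith

lemma exists_lq_gt {α ε : ℝ} (hα : α ∈ Ioo (0:ℝ) 1) (hε : 0 < ε) :
    ∃ β ∈ Ioo (0:ℝ) α, lq μ α - ε < lq μ β := by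
  by_contra h
  push_neg at h
  have : lq μ α ≤ lq μ α - ε := lq_le_of_forall hα h
  linarith

end LqAux

/-- Quantiles are additive for comonotonic random variables. -/
theorem comonotone_quantile_additive {Ω : Type*} [MeasurableSpace Ω]
    (P : Measure Ω) [IsProbabilityMeasure P]
    (X Y : Ω → ℝ) (hX : Measurable X) (hY : Measurable Y)
    (hcom : P.map (fun ω => (X ω, Y ω)) =
      (volume.restrict (Set.Icc (0:ℝ) 1)).map
        (fun u => (lq (P.map X) u, lq (P.map Y) u)))
    (α : ℝ) (hα : α ∈ Set.Ioo (0:ℝ) 1) :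
    lq (P.map (fun ω => X ω + Y ω)) α = lq (P.map X) α + lq (P.map Y) α := by
  open Set Filter LqAux in
  set μX := P.map X with hμX
  set μY := P.map Y with hμY
  set ν := P.map (fun ω => X ω + Y ω) with hν
  haveI : IsProbabilityMeasure μX := Measure.isProbabilityMeasure_map hX.aemeasurable
  haveI : IsProbabilityMeasure μY := Measure.isProbabilityMeasure_map hY.aemeasurable
  haveI : IsProbabilityMeasure ν := Measure.isProbabilityMeasure_map (hX.add hY).aemeasurable
  set g : ℝ → ℝ := fun u => lq μX u + lq μY u with hg_def
  have hg : MonotoneOn g (Ioo (0:ℝ) 1) := fun a ha b hb hab =>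
    add_le_add (lq_mono ha.1 hab hb.2) (lq_mono ha.1 hab hb.2)
  -- a.e. measurability of the quantile functions on [0,1]
  have hres : volume.restrict (Icc (0:ℝ) 1) = volume.restrict (Ioo (0:ℝ) 1) :=
    (Measure.restrict_congr_set Ioo_ae_eq_Icc).symm
  have hqX : AEMeasurable (lq μX) (volume.restrict (Icc (0:ℝ) 1)) := by
    rw [hres]; exact aemeasurable_restrict_of_monotoneOn measurableSet_Ioo monotoneOn_lq
  have hqY : AEMeasurable (lq μY) (volume.restrict (Icc (0:ℝ) 1)) := by
    rw [hres]; exact aemeasurable_restrict_of_monotoneOn measurableSet_Ioo monotoneOn_lq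
  have hpairq : AEMeasurable (fun u => (lq μX u, lq μY u))
      (volume.restrict (Icc (0:ℝ) 1)) := hqX.prodMk hqY
  -- the CDF of X + Y in terms of g
  have key : ∀ x : ℝ, ν (Iic x) = volume.restrict (Icc (0:ℝ) 1) {u | g u ≤ x} := by
    intro x
    have hB : MeasurableSet {p : ℝ × ℝ | p.1 + p.2 ≤ x} :=
      (measurable_fst.add measurable_snd) measurableSet_Iic
    have h1 : ν (Iic x) = P ((fun ω => (X ω, Y ω)) ⁻¹' {p : ℝ × ℝ | p.1 + p.2 ≤ x}) := by
      rw [hν, Measure.map_apply (f := fun ω => X ω + Y ω) (hX.add hY) measurableSet_Iic]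
      rfl
    have h2 : P ((fun ω => (X ω, Y ω)) ⁻¹' {p : ℝ × ℝ | p.1 + p.2 ≤ x})
        = (P.map (fun ω => (X ω, Y ω))) {p : ℝ × ℝ | p.1 + p.2 ≤ x} :=
      (Measure.map_apply (hX.prodMk hY) hB).symm
    rw [h1, h2, hcom, Measure.map_apply_of_aemeasurable hpairq hB]
    rfl
  -- direction 1 : lq ν α ≤ g α
  have dir1 : lq ν α ≤ g α := by
    have hsub' : Ioc (0:ℝ) α ⊆ {u | g u ≤ g α} := by
      intro u hu
      exact hg ⟨hu.1, lt_of_le_of_lt hu.2 hα.2⟩ hα hu.2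
    have hmeas : (ENNReal.ofReal α : ENNReal) ≤ ν (Iic (g α)) := by
      rw [key (g α)]
      calc (ENNReal.ofReal α : ENNReal) = volume (Ioc (0:ℝ) α) := by
            rw [Real.volume_Ioc, sub_zero]
        _ = volume.restrict (Icc (0:ℝ) 1) (Ioc (0:ℝ) α) := by
            rw [Measure.restrict_apply measurableSet_Ioc,
              inter_eq_self_of_subset_left (Ioc_subset_Icc_self.trans
                (Icc_subset_Icc le_rfl hα.2.le))]
        _ ≤ volume.restrict (Icc (0:ℝ) 1) {u | g u ≤ g α} := measure_mono hsub'
    have hmem : α ≤ (ν (Iic (g α))).toReal := by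
      calc α = (ENNReal.ofReal α).toReal := by rw [ENNReal.toReal_ofReal hα.1.le]
        _ ≤ (ν (Iic (g α))).toReal := ENNReal.toReal_mono (measure_ne_top ν _) hmeas
    exact csInf_le (A_bddBelow hα.1) hmem
  -- direction 2 : g α ≤ lq ν α
  have dir2 : g α ≤ lq ν α := by
    refine le_csInf (A_nonempty hα.2) ?_
    intro x hx
    have hx' : α ≤ (ν (Iic x)).toReal := hx
    -- for each β ∈ (0, α), g β ≤ x
    have hforall : ∀ β ∈ Ioo (0:ℝ) α, g β ≤ x := by
      intro β hβ
      have hexu : ∃ u ∈ Ioo β 1, g u ≤ x := by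
        by_contra hno
        push_neg at hno
        have hsub : {u : ℝ | g u ≤ x} ⊆ (Ioo β 1)ᶜ := by
          intro u hu hmem
          exact absurd hu (not_le.2 (hno u hmem))
        have hle : ν (Iic x) ≤ ENNReal.ofReal β := by
          rw [key x]
          calc volume.restrict (Icc (0:ℝ) 1) {u | g u ≤ x}
              ≤ volume.restrict (Icc (0:ℝ) 1) ((Ioo β 1)ᶜ) := measure_mono hsub
            _ = volume ((Ioo β 1)ᶜ ∩ Icc 0 1) :=
                Measure.restrict_apply measurableSet_Ioo.compl
            _ ≤ volume (Icc (0:ℝ) β ∪ {1}) := by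
                refine measure_mono fun u hu => ?_
                obtain ⟨hu1, hu2⟩ := hu
                simp only [mem_compl_iff, mem_Ioo, not_and, not_lt] at hu1
                by_cases hb : u ≤ β
                · exact Or.inl ⟨hu2.1, hb⟩
                · push_neg at hb
                  exact Or.inr (by simp [le_antisymm hu2.2 (hu1 hb)])
            _ ≤ volume (Icc (0:ℝ) β) + volume ({1} : Set ℝ) := measure_union_le _ _
            _ = ENNReal.ofReal β := by
                rw [Real.volume_Icc, Real.volume_singleton, sub_zero, add_zero]
        have : α ≤ β := by
          calc α ≤ (ν (Iic x)).toReal := hx'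
            _ ≤ (ENNReal.ofReal β).toReal := ENNReal.toReal_mono (by simp) hle
            _ = β := ENNReal.toReal_ofReal hβ.1.le
        linarith [hβ.2]
      obtain ⟨u, hu, hux⟩ := hexu
      exact le_trans (hg ⟨hβ.1, hβ.2.trans hα.2⟩ ⟨hβ.1.trans hu.1, hu.2⟩ hu.1.le) hux
    -- ε-argument
    refine le_of_forall_pos_le_add ?_
    intro ε hε
    obtain ⟨β₁, hβ₁, hβ₁'⟩ := exists_lq_gt (μ := μX) hα (half_pos hε)
    obtain ⟨β₂, hβ₂, hβ₂'⟩ := exists_lq_gt (μ := μY) hα (half_pos hε)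
    set β := max β₁ β₂ with hβdef
    have hβmem : β ∈ Ioo (0:ℝ) α := ⟨lt_max_of_lt_left hβ₁.1, max_lt hβ₁.2 hβ₂.2⟩
    have h1 : lq μX β₁ ≤ lq μX β :=
      lq_mono hβ₁.1 (le_max_left _ _) (hβmem.2.trans hα.2)
    have h2 : lq μY β₂ ≤ lq μY β :=
      lq_mono hβ₂.1 (le_max_right _ _) (hβmem.2.trans hα.2)
    have h3 : g β ≤ x := hforall β hβmem
    have hgβ : g β = lq μX β + lq μY β := rfl
    have hgα : g α = lq μX α + lq μY α := rfl
    rw [hgα]; rw [hgβ] at h3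
    linarith
  exact le_antisymm dir1 dir2
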